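/- The pair {E1, E2} forms a valid two-outcome measurement in the SEP theory on two qubits: E1 + E2 = I₄, and both E1 and E2 yield nonnegative trace against every product state ρ_n ⊗ ρ_m of two qubits. -/
import Mathlib


open Matrix Kronecker ComplexOrder

noncomputable section

def σx : Matrix (Fin 2) (Fin 2) ℂ := !![0, 1; 1, 0]
def σy : Matrix (Fin 2) (Fin 2) ℂ := !![0, -Complex.I; Complex.I, 0]
def σz : Matrix (Fin 2) (Fin 2) ℂ := !![1, 0; 0, -1]

def bloch (n : EuclideanSpace ℝ (Fin 3)) : Matrix (Fin 2) (Fin 2) ℂ :=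
  (1 / 2 : ℂ) • (1 + (n 0 : ℂ) • σx + (n 1 : ℂ) • σy + (n 2 : ℂ) • σz)

def kron2 (A B : Matrix (Fin 2) (Fin 2) ℂ) : Matrix (Fin 4) (Fin 4) ℂ :=
  Matrix.reindex finProdFinEquiv finProdFinEquiv (A ⊗ₖ B)

def E1 : Matrix (Fin 4) (Fin 4) ℂ :=
  !![0, 0, 0, 1/2;
     0, 1, 1/2, 0;
     0, 1/2, 1, 0;
     1/2, 0, 0, 0]

def E2 : Matrix (Fin 4) (Fin 4) ℂ := 1 - E1

lemma bloch_eq (n : EuclideanSpace ℝ (Fin 3)) :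
    bloch n = !![(1 + (n 2:ℂ))/2, ((n 0:ℂ) - (n 1:ℂ) * Complex.I)/2;
                 ((n 0:ℂ) + (n 1:ℂ) * Complex.I)/2, (1 - (n 2:ℂ))/2] := by
  ext i j
  fin_cases i <;> fin_cases j <;>
    simp [bloch, σx, σy, σz, Matrix.one_apply] <;> ring

lemma trace1 (n m : EuclideanSpace ℝ (Fin 3)) :
    (E1 * kron2 (bloch n) (bloch m)).trace
      = (((1 + n 0 * m 0 - n 2 * m 2)/2 : ℝ) : ℂ) := by
  rw [bloch_eq, bloch_eq]
  simp [Matrix.trace, Matrix.mul_apply, kron2, E1,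
    Fin.sum_univ_four, Matrix.kroneckerMap_apply, Matrix.submatrix_apply,
    finProdFinEquiv, Fin.divNat, Fin.modNat, Matrix.vecMul, dotProduct,
    show ((0:Fin 4):ℕ) = 0 from rfl, show ((1:Fin 4):ℕ) = 1 from rfl,
    show ((2:Fin 4):ℕ) = 2 from rfl, show ((3:Fin 4):ℕ) = 3 from rfl,
    Fin.mk_zero, Fin.mk_one]
  push_cast
  ring_nf

lemma traceK (n m : EuclideanSpace ℝ (Fin 3)) :
    (kron2 (bloch n) (bloch m)).trace = 1 := by
  rw [bloch_eq, bloch_eq]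
  simp [Matrix.trace, kron2,
    Fin.sum_univ_four, Matrix.kroneckerMap_apply, Matrix.submatrix_apply,
    finProdFinEquiv, Fin.divNat, Fin.modNat,
    show ((0:Fin 4):ℕ) = 0 from rfl, show ((1:Fin 4):ℕ) = 1 from rfl,
    show ((2:Fin 4):ℕ) = 2 from rfl, show ((3:Fin 4):ℕ) = 3 from rfl,
    Fin.mk_zero, Fin.mk_one]
  ring

lemma sum_sq_le (n : EuclideanSpace ℝ (Fin 3)) (h : ‖n‖ ≤ 1) :
    n 0 ^ 2 + n 1 ^ 2 + n 2 ^ 2 ≤ 1 := by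
  have h2 : ‖n‖ ^ 2 ≤ 1 := by nlinarith [norm_nonneg n]
  rw [EuclideanSpace.norm_eq, Real.sq_sqrt (by positivity)] at h2
  simpa [Fin.sum_univ_three, Real.norm_eq_abs, sq_abs] using h2

lemma key_ineq (n m : EuclideanSpace ℝ (Fin 3)) (hn : ‖n‖ ≤ 1) (hm : ‖m‖ ≤ 1) :
    |n 0 * m 0 - n 2 * m 2| ≤ 1 := by
  have h1 := sum_sq_le n hn
  have h2 := sum_sq_le m hm
  rw [abs_le]
  constructor <;> nlinarith [sq_nonneg (n 0 * m 2 + n 2 * m 0),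
    sq_nonneg (n 0 * m 2 - n 2 * m 0), sq_nonneg (n 0 * m 0 - n 2 * m 2),
    sq_nonneg (n 0 * m 0 + n 2 * m 2), sq_nonneg (n 1), sq_nonneg (m 1),
    sq_nonneg (n 1 * m 1)]

/-- `{E1, E2}` is a valid two-outcome SEP measurement: the effects sum to the
identity and each yields nonnegative probability on every product state. -/
theorem E1_E2_valid_SEP_measurement :
    E1 + E2 = 1 ∧
    (∀ n m : EuclideanSpace ℝ (Fin 3), ‖n‖ ≤ 1 → ‖m‖ ≤ 1 →
      0 ≤ (E1 * kron2 (bloch n) (bloch m)).trace ∧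
      0 ≤ (E2 * kron2 (bloch n) (bloch m)).trace) := by
  refine ⟨by simp [E2], fun n m hn hm => ?_⟩
  have key := key_ineq n m hn hm
  rw [abs_le] at key
  constructor
  · rw [trace1]
    rw [Complex.zero_le_real]
    linarith [key.1]
  · have : (E2 * kron2 (bloch n) (bloch m)).trace
        = (((1 - (n 0 * m 0 - n 2 * m 2))/2 : ℝ) : ℂ) := by
      rw [E2, sub_mul, one_mul, Matrix.trace_sub, traceK, trace1]
      push_cast; ring
    rw [this, Complex.zero_le_real]
    linarith [key.2]
end
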